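/- (Theorem 1, uniqueness of decomposition.) Suppose G_{z₁}(φ₁,g₁) · … · G_{z_η}(φ_η,g_η) = G_{z'₁}(φ'₁,g'₁) · … · G_{z'_{η'}}(φ'_{η'},g'_{η'}), where in each product all z's lie in Ξ, all (φ_ι,g_ι) and (φ'_ι,g'_ι) are nontrivial (not both components zero) with φ's in Φ and g's in the corresponding Δ_z, and consecutive subscripts differ (z_ι ≠ z_{ι+1} and z'_ι ≠ z'_{ι+1}). Then η = η', and z_ι = z'_ι, φ_ι = φ'_ι, g_ι = g'_ι for all ι = 1,…,η. In particular, no nonempty such alternating product of nontrivial factors equals the identity matrix I. -/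

import Mathlib

open Polynomial Matrix

noncomputable section

/-- The matrix `D = diag(-1,1,...,1)` of size `ν × ν` with `ν = n + 2`. -/
def Dm (n : ℕ) : Matrix (Fin (n + 2)) (Fin (n + 2)) ℂ :=
  Matrix.diagonal fun i => if i = 0 then -1 else 1

/-- Coefficientwise complex conjugation of a scalar polynomial (`ω` treated as real). -/
def cstar (p : ℂ[X]) : ℂ[X] := p.map (starRingEnd ℂ)

/-- Polynomial matrices of size `(n+2) × (n+2)`. -/
abbrev PM (n : ℕ) := Matrix (Fin (n + 2)) (Fin (n + 2)) ℂ[X]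

/-- `U(ω)* = Σ Uι* ωⁱ` : coefficientwise conjugate transpose of a polynomial matrix. -/
def Mstar (n : ℕ) (U : PM n) : PM n := Matrix.of fun i j => cstar (U j i)

/-- The scalar polynomial `g(ω)* h(ω)` for vector polynomials `g, h`. -/
def pdot (n : ℕ) (g h : Fin (n + 2) → ℂ[X]) : ℂ[X] := ∑ i, cstar (g i) * h i

/-- `Ξ = {z : z₁ = 1, z* D z = 0}`. -/
def Xi (n : ℕ) : Set (Fin (n + 2) → ℂ) :=
  {z | z 0 = 1 ∧ star z ⬝ᵥ (Dm n).mulVec z = 0}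

/-- `Δ_z⁰ = {d : d* z = d* D z = 0}`. -/
def Delta0 (n : ℕ) (z : Fin (n + 2) → ℂ) : Set (Fin (n + 2) → ℂ) :=
  {d | star d ⬝ᵥ z = 0 ∧ star d ⬝ᵥ (Dm n).mulVec z = 0}

/-- `Φ = {φ : φ(0) = 0, φ* = -φ}`. -/
def Phi : Set ℂ[X] := {φ | φ.eval 0 = 0 ∧ cstar φ = -φ}

/-- `Δ_z` : vector polynomials vanishing at 0 with all coefficient vectors in `Δ_z⁰`. -/
def DeltaZ (n : ℕ) (z : Fin (n + 2) → ℂ) : Set (Fin (n + 2) → ℂ[X]) :=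
  {g | (∀ i, (g i).eval 0 = 0) ∧ ∀ k : ℕ, (fun i => (g i).coeff k) ∈ Delta0 n z}

/-- `G_z(φ,g) = D·[z(φ - (1/2)g*g)z* + (zg* - gz*)] + I`. -/
def Gmat (n : ℕ) (z : Fin (n + 2) → ℂ) (φ : ℂ[X]) (g : Fin (n + 2) → ℂ[X]) : PM n :=
  (Dm n).map Polynomial.C *
      Matrix.of (fun i j =>
        Polynomial.C (z i) * (φ - Polynomial.C (1 / 2 : ℂ) * pdot n g g) *
            Polynomial.C (star (z j)) +
          (Polynomial.C (z i) * cstar (g j) - g i * Polynomial.C (star (z j)))) +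
    1

/-- `M` : the group of polynomial matrices with `U(ω) D U(ω)* = D`. -/
def MM (n : ℕ) : Set (PM n) :=
  {U | U * (Dm n).map Polynomial.C * Mstar n U = (Dm n).map Polynomial.C}

/-- `M₀ = {U ∈ M : U(0) = I}`. -/
def M0 (n : ℕ) : Set (PM n) :=
  {U | U ∈ MM n ∧ U.map (fun p => p.eval 0) = 1}

/-- `M_z = {G_z(φ,g) : φ ∈ Φ, g ∈ Δ_z}`. -/
def Mz (n : ℕ) (z : Fin (n + 2) → ℂ) : Set (PM n) :=
  {U | ∃ φ ∈ Phi, ∃ g ∈ DeltaZ n z, U = Gmat n z φ g}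

/-- `Ψ_z = {G_z(φ,0) : φ ∈ Φ}`. -/
def Psi (n : ℕ) (z : Fin (n + 2) → ℂ) : Set (PM n) :=
  {U | ∃ φ ∈ Phi, U = Gmat n z φ 0}

/-- Degree of a polynomial matrix: the largest `ι` with a nonzero coefficient `ω^ι`. -/
def degPM (n : ℕ) (U : PM n) : ℕ :=
  Finset.univ.sup fun p : Fin (n + 2) × Fin (n + 2) => (U p.1 p.2).natDegree

-- diagonal entries as a scalar function
def dd (n : ℕ) (i : Fin (n + 2)) : ℂ := if i = 0 then -1 else 1

lemma Dm_apply_eq (n : ℕ) (i : Fin (n+2)) : Dm n i i = dd n i := by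
  simp [Dm, dd, Matrix.diagonal_apply_eq]

lemma dd_sq (n : ℕ) (i : Fin (n+2)) : dd n i * dd n i = 1 := by
  by_cases h : i = 0 <;> simp [dd, h]

lemma dd_conj (n : ℕ) (i : Fin (n+2)) : (starRingEnd ℂ) (dd n i) = dd n i := by
  by_cases h : i = 0 <;> simp [dd, h]

lemma mulVec_Dm (n : ℕ) (z : Fin (n+2) → ℂ) (i : Fin (n+2)) :
    (Dm n).mulVec z i = dd n i * z i := by
  simp [Dm, Matrix.mulVec_diagonal, dd]

lemma dot_Dm (n : ℕ) (w z : Fin (n+2) → ℂ) :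
    star w ⬝ᵥ (Dm n).mulVec z = ∑ k, (starRingEnd ℂ) (w k) * (dd n k * z k) := by
  simp [dotProduct, mulVec_Dm, Pi.star_apply]

-- KEY LEMMA A: distinct points of Xi are not D-orthogonal
lemma xi_dot_ne (n : ℕ) {z w : Fin (n+2) → ℂ} (hz : z ∈ Xi n) (hw : w ∈ Xi n)
    (hne : z ≠ w) : star z ⬝ᵥ (Dm n).mulVec w ≠ 0 := by
  intro h0
  apply hne
  have hwz : star w ⬝ᵥ (Dm n).mulVec z = 0 := by
    have := congrArg (starRingEnd ℂ) h0
    rw [dot_Dm] at this ⊢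
    rw [map_sum] at this
    simp only [map_zero] at this
    rw [← this]
    apply Finset.sum_congr rfl
    intro k _
    rw [_root_.map_mul, _root_.map_mul, dd_conj n k, Complex.conj_conj]
    ring
  -- u = z - w
  set u : Fin (n+2) → ℂ := z - w with hu
  have hu0 : u 0 = 0 := by simp [hu, hz.1, hw.1]
  have hsum : ∑ k, (starRingEnd ℂ) (u k) * (dd n k * u k) = 0 := by
    have hzz := hz.2; have hww := hw.2
    rw [dot_Dm] at hzz hww hwz
    rw [dot_Dm] at h0
    have : ∑ k, (starRingEnd ℂ) (u k) * (dd n k * u k)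
        = (∑ k, (starRingEnd ℂ) (z k) * (dd n k * z k))
          - (∑ k, (starRingEnd ℂ) (z k) * (dd n k * w k))
          - (∑ k, (starRingEnd ℂ) (w k) * (dd n k * z k))
          + (∑ k, (starRingEnd ℂ) (w k) * (dd n k * w k)) := by
      rw [← Finset.sum_sub_distrib, ← Finset.sum_sub_distrib, ← Finset.sum_add_distrib]
      apply Finset.sum_congr rfl
      intro k _
      simp only [hu, Pi.sub_apply, map_sub]
      ring
    rw [this, hzz, hww, h0, hwz]; ring
  -- real parts: each term is dd * normSq, with u 0 = 0 all terms nonneg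
  have hterm : ∀ k, (starRingEnd ℂ) (u k) * (dd n k * u k) = (Complex.normSq (u k) : ℂ) ∨ u k = 0 := by
    intro k
    by_cases hk : k = 0
    · right; rw [hk]; exact hu0
    · left; simp [dd, hk, Complex.normSq_eq_conj_mul_self]
  have hre : ∀ k, u k = 0 := by
    have hres : ∑ k, Complex.normSq (u k) = 0 := by
      have h1 := congrArg Complex.re hsum
      rw [Complex.re_sum, Complex.zero_re] at h1
      rw [← h1]
      apply Finset.sum_congr rfl
      intro k _
      rcases hterm k with h | h
      · rw [h]; simp
      · simp [h]
    intro k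
    have hk := (Finset.sum_eq_zero_iff_of_nonneg (fun k _ => Complex.normSq_nonneg (u k))).mp hres k (Finset.mem_univ k)
    exact Complex.normSq_eq_zero.mp hk
  funext k
  have := hre k
  simpa [hu, sub_eq_zero] using this

-- cstar basics
lemma cstar_add (p q : ℂ[X]) : cstar (p + q) = cstar p + cstar q := Polynomial.map_add _
lemma cstar_mul (p q : ℂ[X]) : cstar (p * q) = cstar p * cstar q := Polynomial.map_mul _
lemma cstar_neg (p : ℂ[X]) : cstar (-p) = -cstar p := by simp [cstar]
lemma cstar_sub (p q : ℂ[X]) : cstar (p - q) = cstar p - cstar q := by simp [cstar]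
lemma cstar_zero : cstar 0 = 0 := by simp [cstar]
lemma cstar_C (a : ℂ) : cstar (Polynomial.C a) = Polynomial.C ((starRingEnd ℂ) a) := by
  simp [cstar]
lemma cstar_coeff (p : ℂ[X]) (k : ℕ) : (cstar p).coeff k = (starRingEnd ℂ) (p.coeff k) := by
  simp [cstar, Polynomial.coeff_map]
lemma cstar_natDegree (p : ℂ[X]) : (cstar p).natDegree = p.natDegree := by
  simp [cstar, Polynomial.natDegree_map]
lemma cstar_cstar (p : ℂ[X]) : cstar (cstar p) = p := by
  ext k; simp [cstar_coeff]

-- pdot basics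
lemma cstar_pdot (n : ℕ) (g h : Fin (n+2) → ℂ[X]) : cstar (pdot n g h) = pdot n h g := by
  unfold pdot
  rw [show cstar (∑ i, cstar (g i) * h i) = ∑ i, cstar (cstar (g i) * h i) from
    map_sum (Polynomial.mapRingHom (starRingEnd ℂ)) _ _]
  apply Finset.sum_congr rfl
  intro i _
  rw [cstar_mul, cstar_cstar]; ring

lemma pdot_add_left (n : ℕ) (g g' h : Fin (n+2) → ℂ[X]) :
    pdot n (g + g') h = pdot n g h + pdot n g' h := by
  unfold pdot
  rw [← Finset.sum_add_distrib]
  exact Finset.sum_congr rfl fun i _ => by simp [cstar_add]; ring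

lemma pdot_add_right (n : ℕ) (g h h' : Fin (n+2) → ℂ[X]) :
    pdot n g (h + h') = pdot n g h + pdot n g h' := by
  unfold pdot
  rw [← Finset.sum_add_distrib]
  exact Finset.sum_congr rfl fun i _ => by simp; ring

lemma pdot_neg_left (n : ℕ) (g h : Fin (n+2) → ℂ[X]) : pdot n (-g) h = -pdot n g h := by
  unfold pdot
  rw [← Finset.sum_neg_distrib]
  exact Finset.sum_congr rfl fun i _ => by simp [cstar_neg]

lemma pdot_neg_right (n : ℕ) (g h : Fin (n+2) → ℂ[X]) : pdot n g (-h) = -pdot n g h := by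
  unfold pdot
  rw [← Finset.sum_neg_distrib]
  exact Finset.sum_congr rfl fun i _ => by simp

lemma pdot_zero_left (n : ℕ) (h : Fin (n+2) → ℂ[X]) : pdot n 0 h = 0 := by
  unfold pdot; simp [cstar_zero]

lemma pdot_coeff_zero (n : ℕ) {z : Fin (n+2) → ℂ} {g h : Fin (n+2) → ℂ[X]}
    (hg : ∀ i, (g i).eval 0 = 0) : (pdot n g h).coeff 0 = 0 := by
  unfold pdot
  rw [Polynomial.finset_sum_coeff]
  apply Finset.sum_eq_zero
  intro i _
  rw [Polynomial.mul_coeff_zero, cstar_coeff, Polynomial.coeff_zero_eq_eval_zero, hg i]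
  simp

-- Delta0 : first coordinate vanishes
lemma delta0_fst (n : ℕ) {z : Fin (n+2) → ℂ} (hz : z ∈ Xi n) {d : Fin (n+2) → ℂ}
    (hd : d ∈ Delta0 n z) : d 0 = 0 := by
  have h1 := hd.1; have h2 := hd.2
  have key : star d ⬝ᵥ z - star d ⬝ᵥ (Dm n).mulVec z = 2 * (starRingEnd ℂ) (d 0) := by
    rw [dotProduct, dot_Dm, ← Finset.sum_sub_distrib]
    rw [Finset.sum_eq_single 0]
    · simp [dd, hz.1, Pi.star_apply]; ring
    · intro k _ hk
      simp [dd, hk, Pi.star_apply]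
    · simp
  rw [h1, h2, sub_zero] at key
  field_simp at key
  simpa using key.symm

lemma deltaZ_fst (n : ℕ) {z : Fin (n+2) → ℂ} (hz : z ∈ Xi n) {g : Fin (n+2) → ℂ[X]}
    (hg : g ∈ DeltaZ n z) : g 0 = 0 := by
  ext k
  rw [Polynomial.coeff_zero]
  exact delta0_fst n hz (hg.2 k)

-- Scalar polynomial identities I1-I4
lemma idI1 (n : ℕ) {z : Fin (n+2) → ℂ} (hz : z ∈ Xi n) :
    ∑ k, Polynomial.C (dd n k * star (z k) * z k) = (0 : ℂ[X]) := by
  rw [← map_sum Polynomial.C _ Finset.univ]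
  have : ∑ k, dd n k * star (z k) * z k = 0 := by
    have h := hz.2
    rw [dot_Dm] at h
    rw [← h]
    exact Finset.sum_congr rfl fun k _ => by simp [Pi.star_apply]; ring
  rw [this, map_zero]

lemma idI2 (n : ℕ) {z : Fin (n+2) → ℂ} {h : Fin (n+2) → ℂ[X]}
    (hh : h ∈ DeltaZ n z) :
    ∑ k, Polynomial.C (dd n k * star (z k)) * h k = (0 : ℂ[X]) := by
  ext m
  rw [Polynomial.finset_sum_coeff, Polynomial.coeff_zero]
  have hd := (hh.2 m).2
  rw [dot_Dm] at hd
  have : ∑ k, (dd n k * star (z k)) * (h k).coeff m = 0 := by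
    have := congrArg (starRingEnd ℂ) hd
    rw [map_sum, map_zero] at this
    rw [← this]
    apply Finset.sum_congr rfl
    intro k _
    rw [_root_.map_mul, _root_.map_mul, dd_conj n k, Complex.conj_conj]
    simp [Pi.star_apply]
    ring
  rw [← this]
  exact Finset.sum_congr rfl fun k _ => by rw [Polynomial.coeff_C_mul]

lemma idI3 (n : ℕ) {z : Fin (n+2) → ℂ} {g : Fin (n+2) → ℂ[X]}
    (hg : g ∈ DeltaZ n z) :
    ∑ k, cstar (g k) * Polynomial.C (dd n k * z k) = (0 : ℂ[X]) := by
  ext m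
  rw [Polynomial.finset_sum_coeff, Polynomial.coeff_zero]
  have hd := (hg.2 m).2
  rw [dot_Dm] at hd
  rw [← hd]
  apply Finset.sum_congr rfl
  intro k _
  rw [Polynomial.coeff_mul_C, cstar_coeff]

lemma idI4 (n : ℕ) {z : Fin (n+2) → ℂ} (hz : z ∈ Xi n) {g h : Fin (n+2) → ℂ[X]}
    (hg : g ∈ DeltaZ n z) :
    ∑ k, cstar (g k) * Polynomial.C (dd n k) * h k = pdot n g h := by
  unfold pdot
  apply Finset.sum_congr rfl
  intro k _
  by_cases hk : k = 0
  · subst hk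
    rw [deltaZ_fst n hz hg]
    simp [cstar_zero]
  · simp [dd, hk]

def Ment (n : ℕ) (z : Fin (n+2) → ℂ) (q : ℂ[X]) (g : Fin (n+2) → ℂ[X]) : PM n :=
  Matrix.of fun i j =>
    Polynomial.C (z i) * q * Polynomial.C (star (z j)) +
      (Polynomial.C (z i) * cstar (g j) - g i * Polynomial.C (star (z j)))

lemma Gmat_eq (n : ℕ) (z : Fin (n+2) → ℂ) (φ : ℂ[X]) (g : Fin (n+2) → ℂ[X]) :
    Gmat n z φ g =
      (Dm n).map Polynomial.C * Ment n z (φ - Polynomial.C (1/2 : ℂ) * pdot n g g) g + 1 := rfl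

lemma DmapC (n : ℕ) :
    (Dm n).map Polynomial.C = Matrix.diagonal (fun i => Polynomial.C (dd n i)) := by
  unfold Dm dd
  rw [Matrix.diagonal_map (map_zero _)]

lemma DmapC_mul_apply (n : ℕ) (M : PM n) (i j : Fin (n+2)) :
    ((Dm n).map Polynomial.C * M) i j = Polynomial.C (dd n i) * M i j := by
  rw [DmapC, Matrix.diagonal_mul]

lemma DmapC_sq (n : ℕ) :
    (Dm n).map Polynomial.C * (Dm n).map Polynomial.C = (1 : PM n) := by
  rw [DmapC, Matrix.diagonal_mul_diagonal]
  have e : (fun i => Polynomial.C (dd n i) * Polynomial.C (dd n i)) = fun _ => (1:ℂ[X]) :=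
    funext fun i => by rw [← _root_.map_mul, dd_sq, _root_.map_one]
  rw [e, Matrix.diagonal_one]

-- Claim 1 : M(q,g) * D * M(r,h) = M(-(g*h), 0)
lemma claim1 (n : ℕ) {z : Fin (n+2) → ℂ} (hz : z ∈ Xi n) {g h : Fin (n+2) → ℂ[X]}
    (hg : g ∈ DeltaZ n z) (hh : h ∈ DeltaZ n z) (q r : ℂ[X]) :
    Ment n z q g * ((Dm n).map Polynomial.C * Ment n z r h) =
      Ment n z (-(pdot n g h)) 0 := by
  apply Matrix.ext; intro i j
  rw [Matrix.mul_apply]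
  set u : ℂ[X] := r * Polynomial.C (star (z j)) + cstar (h j) with hu
  set v : ℂ[X] := Polynomial.C (z i) * q - g i with hv
  have step : ∀ k, Ment n z q g i k * (((Dm n).map Polynomial.C * Ment n z r h) k j) =
      (v * u) * Polynomial.C (dd n k * star (z k) * z k)
      + (-(v * Polynomial.C (star (z j)))) * (Polynomial.C (dd n k * star (z k)) * h k)
      + (Polynomial.C (z i) * u) * (cstar (g k) * Polynomial.C (dd n k * z k))
      + (-(Polynomial.C (z i) * Polynomial.C (star (z j)))) *
          (cstar (g k) * Polynomial.C (dd n k) * h k) := by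
    intro k
    rw [DmapC_mul_apply]
    show (Polynomial.C (z i) * q * Polynomial.C (star (z k)) +
      (Polynomial.C (z i) * cstar (g k) - g i * Polynomial.C (star (z k)))) *
      (Polynomial.C (dd n k) * (Polynomial.C (z k) * r * Polynomial.C (star (z j)) +
      (Polynomial.C (z k) * cstar (h j) - h k * Polynomial.C (star (z j))))) = _
    simp only [hu, hv, _root_.map_mul]
    ring
  rw [Finset.sum_congr rfl (fun k _ => step k)]
  simp only [Finset.sum_add_distrib, ← Finset.mul_sum]
  rw [idI1 n hz, idI2 n hh, idI3 n hg, idI4 n hz hg]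
  show _ = Polynomial.C (z i) * (-(pdot n g h)) * Polynomial.C (star (z j)) +
    (Polynomial.C (z i) * cstar ((0 : Fin (n+2) → ℂ[X]) j) -
      (0 : Fin (n+2) → ℂ[X]) i * Polynomial.C (star (z j)))
  simp only [Pi.zero_apply, cstar_zero]
  ring

lemma Ment_add (n : ℕ) (z : Fin (n+2) → ℂ) (q r : ℂ[X]) (g h : Fin (n+2) → ℂ[X]) :
    Ment n z q g + Ment n z r h = Ment n z (q + r) (g + h) := by
  apply Matrix.ext; intro i j
  show (Polynomial.C (z i) * q * Polynomial.C (star (z j)) +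
      (Polynomial.C (z i) * cstar (g j) - g i * Polynomial.C (star (z j)))) +
    (Polynomial.C (z i) * r * Polynomial.C (star (z j)) +
      (Polynomial.C (z i) * cstar (h j) - h i * Polynomial.C (star (z j)))) =
    Polynomial.C (z i) * (q + r) * Polynomial.C (star (z j)) +
      (Polynomial.C (z i) * cstar ((g + h) j) - (g + h) i * Polynomial.C (star (z j)))
  simp only [Pi.add_apply, cstar_add]
  ring

lemma Gmat_zero (n : ℕ) (z : Fin (n+2) → ℂ) : Gmat n z 0 0 = 1 := by
  rw [Gmat_eq]
  have : Ment n z (0 - Polynomial.C (1/2 : ℂ) * pdot n 0 0) 0 = 0 := by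
    apply Matrix.ext; intro i j
    show Polynomial.C (z i) * (0 - Polynomial.C (1/2 : ℂ) * pdot n 0 0) * Polynomial.C (star (z j)) +
      (Polynomial.C (z i) * cstar ((0 : Fin (n+2) → ℂ[X]) j) -
        (0 : Fin (n+2) → ℂ[X]) i * Polynomial.C (star (z j))) = 0
    rw [pdot_zero_left]
    simp [cstar_zero]
  rw [this, Matrix.mul_zero, zero_add]

-- product formula
lemma Gmul (n : ℕ) {z : Fin (n+2) → ℂ} (hz : z ∈ Xi n) {g h : Fin (n+2) → ℂ[X]}
    (hg : g ∈ DeltaZ n z) (hh : h ∈ DeltaZ n z) (φ ψ : ℂ[X]) :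
    Gmat n z φ g * Gmat n z ψ h =
      Gmat n z (φ + ψ + Polynomial.C (1/2 : ℂ) * (pdot n h g - pdot n g h)) (g + h) := by
  rw [Gmat_eq, Gmat_eq, Gmat_eq]
  set DC := (Dm n).map Polynomial.C with hDC
  set q1 := φ - Polynomial.C (1/2 : ℂ) * pdot n g g with hq1
  set q2 := ψ - Polynomial.C (1/2 : ℂ) * pdot n h h with hq2
  have expand : (DC * Ment n z q1 g + 1) * (DC * Ment n z q2 h + 1) =
      DC * (Ment n z q1 g * (DC * Ment n z q2 h)) + DC * Ment n z q1 g + DC * Ment n z q2 h + 1 := by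
    noncomm_ring
  rw [expand, claim1 n hz hg hh q1 q2]
  have : DC * Ment n z (-(pdot n g h)) 0 + DC * Ment n z q1 g + DC * Ment n z q2 h =
      DC * (Ment n z (-(pdot n g h)) 0 + Ment n z q1 g + Ment n z q2 h) := by
    rw [Matrix.mul_add, Matrix.mul_add]
  rw [this, Ment_add, Ment_add]
  have h2 : Polynomial.C (1/2:ℂ) * 2 = 1 := by
    rw [show (2:ℂ[X]) = Polynomial.C 2 from (map_ofNat Polynomial.C 2).symm, ← _root_.map_mul]
    norm_num
  have eq : -(pdot n g h) + q1 + q2 =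
      φ + ψ + Polynomial.C (1/2 : ℂ) * (pdot n h g - pdot n g h) -
        Polynomial.C (1/2 : ℂ) * pdot n (g + h) (g + h) := by
    rw [hq1, hq2, pdot_add_left, pdot_add_right, pdot_add_right]
    linear_combination (pdot n g h) * h2
  rw [eq, zero_add]

lemma natDeg_pos {p : ℂ[X]} (hp : p ≠ 0) (h0 : p.coeff 0 = 0) : 0 < p.natDegree := by
  by_contra hc
  push_neg at hc
  have := Polynomial.eq_C_of_natDegree_le_zero (Nat.le_of_lt_succ (Nat.lt_succ_of_le hc))
  rw [h0, map_zero] at this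
  exact hp this

lemma phi_coeff_re {φ : ℂ[X]} (hφ : φ ∈ Phi) (k : ℕ) : (φ.coeff k).re = 0 := by
  have := congrArg (fun p => Polynomial.coeff p k) hφ.2
  simp only [cstar_coeff, Polynomial.coeff_neg] at this
  have h2 := congrArg Complex.re this
  simp only [Complex.conj_re, Complex.neg_re] at h2
  linarith

-- Lemma B
lemma lemB (n : ℕ) {z : Fin (n+2) → ℂ} {φ : ℂ[X]} {g : Fin (n+2) → ℂ[X]}
    (hz : z ∈ Xi n) (hφ : φ ∈ Phi) (hg : g ∈ DeltaZ n z) (hnt : ¬(φ = 0 ∧ g = 0)) :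
    ∃ (δ : ℕ) (c : ℂ), c ≠ 0 ∧ 1 ≤ δ ∧
      (∀ i j, (Gmat n z φ g i j).natDegree ≤ δ) ∧
      (∀ i j, (Gmat n z φ g i j).coeff δ = dd n i * z i * c * star (z j)) := by
  set q : ℂ[X] := φ - Polynomial.C (1/2 : ℂ) * pdot n g g with hq
  have hq0 : q.coeff 0 = 0 := by
    rw [hq, Polynomial.coeff_sub, Polynomial.coeff_C_mul,
      pdot_coeff_zero n (z := z) hg.1, Polynomial.coeff_zero_eq_eval_zero, hφ.1]
    simp
  have key : q ≠ 0 ∧ ∀ j, (g j).natDegree < q.natDegree := by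
    by_cases hgz : g = 0
    · have hqφ : q = φ := by rw [hq, hgz, pdot_zero_left]; simp
      have hφ0 : φ ≠ 0 := fun h => hnt ⟨h, hgz⟩
      have hqne : q ≠ 0 := by rw [hqφ]; exact hφ0
      refine ⟨hqne, fun j => ?_⟩
      rw [hgz]
      simpa using natDeg_pos hqne hq0
    · -- g ≠ 0 case
      set m := Finset.univ.sup fun i => (g i).natDegree with hm
      have hgle : ∀ i, (g i).natDegree ≤ m := fun i =>
        Finset.le_sup (f := fun i => (g i).natDegree) (Finset.mem_univ i)
      obtain ⟨j0, hj0⟩ : ∃ j, g j ≠ 0 := by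
        by_contra hco; push_neg at hco; exact hgz (funext hco)
      have hm1 : 1 ≤ m := by
        have : 0 < (g j0).natDegree :=
          natDeg_pos hj0 (by rw [Polynomial.coeff_zero_eq_eval_zero]; exact hg.1 j0)
        exact le_trans this (hgle j0)
      obtain ⟨i0, -, hi0⟩ := Finset.exists_mem_eq_sup Finset.univ
        (Finset.univ_nonempty) (fun i => (g i).natDegree)
      have hmi0 : m = (g i0).natDegree := by rw [hm, hi0]
      have hi0ne : g i0 ≠ 0 := by
        intro h
        rw [h, Polynomial.natDegree_zero] at hmi0
        omega
      have hlc : (g i0).coeff m = (g i0).leadingCoeff := by rw [hmi0]; rfl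
      have hlcne : (g i0).coeff m ≠ 0 := by
        rw [hlc]; exact Polynomial.leadingCoeff_ne_zero.mpr hi0ne
      have hpc : (pdot n g g).coeff (m + m) = ∑ i, (Complex.normSq ((g i).coeff m) : ℂ) := by
        unfold pdot
        rw [Polynomial.finset_sum_coeff]
        apply Finset.sum_congr rfl
        intro i _
        rw [Polynomial.coeff_mul_add_eq_of_natDegree_le (by rw [cstar_natDegree]; exact hgle i) (hgle i),
          cstar_coeff, Complex.normSq_eq_conj_mul_self]
      have hrepos : 0 < (∑ i, (Complex.normSq ((g i).coeff m) : ℂ)).re := by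
        rw [Complex.re_sum]
        apply Finset.sum_pos'
        · intro i _
          simp [Complex.ofReal_re, Complex.normSq_nonneg]
        · exact ⟨i0, Finset.mem_univ i0, by simpa using Complex.normSq_pos.mpr hlcne⟩
      have hqm : (q.coeff (m + m)).re ≠ 0 := by
        rw [hq, Polynomial.coeff_sub, Polynomial.coeff_C_mul, hpc, Complex.sub_re,
          phi_coeff_re hφ, Complex.mul_re]
        have him : (1/2 : ℂ).im = 0 := by norm_num
        have hre : (1/2 : ℂ).re = 1/2 := by norm_num
        rw [him, hre]
        intro hcon
        rw [zero_mul, sub_zero] at hcon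
        have : (∑ i, (Complex.normSq ((g i).coeff m) : ℂ)).re = 0 := by linarith
        linarith
      have hne : q.coeff (m+m) ≠ 0 := fun h => hqm (by rw [h]; simp)
      have hq_ne : q ≠ 0 := fun h => hne (by rw [h]; simp)
      have hdeg : m + m ≤ q.natDegree := Polynomial.le_natDegree_of_ne_zero hne
      exact ⟨hq_ne, fun j => lt_of_le_of_lt (hgle j) (by omega)⟩
  obtain ⟨hqne, hglt⟩ := key
  have hδ1 : 1 ≤ q.natDegree := natDeg_pos hqne hq0
  have hent : ∀ i j, Gmat n z φ g i j =
      Polynomial.C (dd n i) * (Polynomial.C (z i) * q * Polynomial.C (star (z j)) +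
        (Polynomial.C (z i) * cstar (g j) - g i * Polynomial.C (star (z j)))) +
      if i = j then 1 else 0 := by
    intro i j
    rw [Gmat_eq]
    rw [Matrix.add_apply, DmapC_mul_apply, Matrix.one_apply]
    rfl
  refine ⟨q.natDegree, q.leadingCoeff, Polynomial.leadingCoeff_ne_zero.mpr hqne, hδ1, ?_, ?_⟩
  · intro i j
    rw [hent]
    apply le_trans (Polynomial.natDegree_add_le _ _)
    rw [max_le_iff]
    constructor
    · apply le_trans (Polynomial.natDegree_mul_le)
      rw [Polynomial.natDegree_C, zero_add]
      apply le_trans (Polynomial.natDegree_add_le _ _)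
      rw [max_le_iff]
      constructor
      · apply le_trans (Polynomial.natDegree_mul_le)
        apply le_trans (add_le_add_left (Polynomial.natDegree_mul_le) _)
        simp [Polynomial.natDegree_C]
      · apply le_trans (Polynomial.natDegree_sub_le _ _)
        rw [max_le_iff]
        constructor
        · apply le_trans (Polynomial.natDegree_mul_le)
          rw [Polynomial.natDegree_C, zero_add, cstar_natDegree]
          exact le_of_lt (hglt j)
        · apply le_trans (Polynomial.natDegree_mul_le)
          rw [Polynomial.natDegree_C, add_zero]
          exact le_of_lt (hglt i)
    · split
      · rw [Polynomial.natDegree_one]; omega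
      · rw [Polynomial.natDegree_zero]; omega
  · intro i j
    rw [hent, Polynomial.coeff_add, Polynomial.coeff_C_mul, Polynomial.coeff_add,
      Polynomial.coeff_sub]
    have e1 : (Polynomial.C (z i) * q * Polynomial.C (star (z j))).coeff q.natDegree
        = z i * q.leadingCoeff * star (z j) := by
      rw [mul_assoc, Polynomial.coeff_C_mul, Polynomial.coeff_mul_C, Polynomial.coeff_natDegree]
      ring
    have e2 : (Polynomial.C (z i) * cstar (g j)).coeff q.natDegree = 0 := by
      rw [Polynomial.coeff_C_mul,
        Polynomial.coeff_eq_zero_of_natDegree_lt (by rw [cstar_natDegree]; exact hglt j)]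
      ring
    have e3 : (g i * Polynomial.C (star (z j))).coeff q.natDegree = 0 := by
      rw [Polynomial.coeff_mul_C, Polynomial.coeff_eq_zero_of_natDegree_lt (hglt i)]
      ring
    have e4 : (if i = j then (1:ℂ[X]) else 0).coeff q.natDegree = 0 := by
      split
      · rw [Polynomial.coeff_one]
        simp only [ite_eq_right_iff]
        omega
      · simp
    rw [e1, e2, e3, e4]
    ring

-- matrix polynomial product coefficient lemmas
lemma matmul_deg (n : ℕ) (A B : PM n) (a b : ℕ)
    (hA : ∀ i j, (A i j).natDegree ≤ a) (hB : ∀ i j, (B i j).natDegree ≤ b) :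
    ∀ i j, ((A * B) i j).natDegree ≤ a + b := by
  intro i j
  rw [Matrix.mul_apply]
  apply Polynomial.natDegree_sum_le_of_forall_le
  intro k _
  exact le_trans Polynomial.natDegree_mul_le (add_le_add (hA i k) (hB k j))

lemma matmul_coeff (n : ℕ) (A B : PM n) (a b : ℕ)
    (hA : ∀ i j, (A i j).natDegree ≤ a) (hB : ∀ i j, (B i j).natDegree ≤ b) :
    ∀ i j, ((A * B) i j).coeff (a + b) = ∑ k, (A i k).coeff a * (B k j).coeff b := by
  intro i j
  rw [Matrix.mul_apply, Polynomial.finset_sum_coeff]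
  exact Finset.sum_congr rfl fun k _ =>
    Polynomial.coeff_mul_add_eq_of_natDegree_le (hA i k) (hB k j)

abbrev Tt (n : ℕ) := (Fin (n+2) → ℂ) × ℂ[X] × (Fin (n+2) → ℂ[X])

def okT (n : ℕ) (x : Tt n) : Prop :=
  x.1 ∈ Xi n ∧ x.2.1 ∈ Phi ∧ x.2.2 ∈ DeltaZ n x.1 ∧ ¬(x.2.1 = 0 ∧ x.2.2 = 0)

def GofT (n : ℕ) (x : Tt n) : PM n := Gmat n x.1 x.2.1 x.2.2

def GP (n : ℕ) (L : List (Tt n)) : PM n := (L.map (GofT n)).prod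

lemma GP_cons (n : ℕ) (x : Tt n) (t : List (Tt n)) :
    GP n (x :: t) = GofT n x * GP n t := by
  unfold GP
  rw [List.map_cons, List.prod_cons]

-- LEMMA L
lemma lemL (n : ℕ) : ∀ (t : List (Tt n)) (x : Tt n), (∀ y ∈ x :: t, okT n y) →
    (x :: t).Chain' (fun a b => a.1 ≠ b.1) →
    ∃ (N : ℕ) (c : ℂ) (w : Fin (n+2) → ℂ), c ≠ 0 ∧ 1 ≤ N ∧ w 0 = 1 ∧
      (∀ i j, ((GP n (x :: t)) i j).natDegree ≤ N) ∧
      (∀ i j, ((GP n (x :: t)) i j).coeff N = dd n i * x.1 i * c * star (w j)) := by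
  intro t
  induction t with
  | nil =>
    intro x hok _
    have hx := hok x (by simp)
    obtain ⟨δ, c, hc, hδ, hdeg, hcoeff⟩ := lemB n hx.1 hx.2.1 hx.2.2.1 hx.2.2.2
    have hGP : GP n [x] = GofT n x := by
      unfold GP; simp
    refine ⟨δ, c, x.1, hc, hδ, hx.1.1, ?_, ?_⟩
    · intro i j; rw [hGP]; exact hdeg i j
    · intro i j; rw [hGP]; exact hcoeff i j
  | cons y t' ih =>
    intro x hok hch
    have hx := hok x (by simp)
    have hok' : ∀ u ∈ y :: t', okT n u := fun u hu => hok u (by simp [hu])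
    have hch' : (y :: t').Chain' (fun a b => a.1 ≠ b.1) := (List.isChain_cons.mp hch).2
    have hxy : x.1 ≠ y.1 := (List.isChain_cons_cons.mp hch).1
    obtain ⟨N, c, w, hc, hN, hw0, hdegB, hcoeffB⟩ := ih y hok' hch'
    obtain ⟨δ, cx, hcx, hδ, hdegA, hcoeffA⟩ := lemB n hx.1 hx.2.1 hx.2.2.1 hx.2.2.2
    have hdotne : star x.1 ⬝ᵥ (Dm n).mulVec y.1 ≠ 0 :=
      xi_dot_ne n hx.1 (hok y (by simp)).1 hxy
    refine ⟨δ + N, cx * (star x.1 ⬝ᵥ (Dm n).mulVec y.1) * c, w,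
      by simp [hcx, hc, hdotne], by omega, hw0, ?_, ?_⟩
    · intro i j
      rw [GP_cons]
      exact matmul_deg n (GofT n x) (GP n (y :: t')) δ N hdegA hdegB i j
    · intro i j
      rw [GP_cons, matmul_coeff n (GofT n x) (GP n (y :: t')) δ N hdegA hdegB i j]
      have : ∀ k, ((GofT n x) i k).coeff δ * ((GP n (y :: t')) k j).coeff N =
          (dd n i * x.1 i * cx * c * star (w j)) *
            ((starRingEnd ℂ) (x.1 k) * (dd n k * y.1 k)) := by
        intro k
        show (Gmat n x.1 x.2.1 x.2.2 i k).coeff δ * _ = _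
        rw [hcoeffA i k, hcoeffB k j]
        have : (star (x.1 k) : ℂ) = (starRingEnd ℂ) (x.1 k) := rfl
        rw [this]
        ring
      rw [Finset.sum_congr rfl (fun k _ => this k), ← Finset.mul_sum, ← dot_Dm]
      ring

-- product of a nonempty ok list is not 1
lemma lemZ1 (n : ℕ) (t : List (Tt n)) (x : Tt n) (hok : ∀ y ∈ x :: t, okT n y)
    (hch : (x :: t).Chain' (fun a b => a.1 ≠ b.1)) : GP n (x :: t) ≠ 1 := by
  obtain ⟨N, c, w, hc, hN, hw0, hdeg, hcoeff⟩ := lemL n t x hok hch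
  intro h1
  have := hcoeff 0 0
  rw [h1] at this
  have hx0 : x.1 0 = 1 := (hok x (by simp)).1.1
  rw [hx0, hw0] at this
  simp only [Matrix.one_apply_eq, dd, if_pos rfl] at this
  rw [Polynomial.coeff_one] at this
  have hN0 : N ≠ 0 := by omega
  rw [if_neg (by omega)] at this
  simp at this
  exact hc this

-- head z equality
lemma lemZ2 (n : ℕ) (t t' : List (Tt n)) (x x' : Tt n)
    (hok : ∀ y ∈ x :: t, okT n y) (hok' : ∀ y ∈ x' :: t', okT n y)
    (hch : (x :: t).Chain' (fun a b => a.1 ≠ b.1))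
    (hch' : (x' :: t').Chain' (fun a b => a.1 ≠ b.1))
    (heq : GP n (x :: t) = GP n (x' :: t')) : x.1 = x'.1 := by
  obtain ⟨N, c, w, hc, hN, hw0, hdeg, hcoeff⟩ := lemL n t x hok hch
  obtain ⟨N', c', w', hc', hN', hw0', hdeg', hcoeff'⟩ := lemL n t' x' hok' hch'
  have hx0 : x.1 0 = 1 := (hok x (by simp)).1.1
  have hx0' : x'.1 0 = 1 := (hok' x' (by simp)).1.1
  have hNdeg : (GP n (x :: t) 0 0).natDegree = N := by
    apply le_antisymm (hdeg 0 0)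
    apply Polynomial.le_natDegree_of_ne_zero
    rw [hcoeff 0 0, hx0, hw0]
    simp [dd, hc]
  have hNdeg' : (GP n (x' :: t') 0 0).natDegree = N' := by
    apply le_antisymm (hdeg' 0 0)
    apply Polynomial.le_natDegree_of_ne_zero
    rw [hcoeff' 0 0, hx0', hw0']
    simp [dd, hc']
  have hNN : N = N' := by rw [← hNdeg, ← hNdeg', heq]
  have hcc : c = c' := by
    have h1 := hcoeff 0 0
    have h2 := hcoeff' 0 0
    rw [← heq, ← hNN] at h2
    rw [h1, hx0, hw0] at h2
    rw [hx0', hw0'] at h2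
    simpa [dd] using h2
  funext i
  have h1 := hcoeff i 0
  have h2 := hcoeff' i 0
  rw [← heq, ← hNN] at h2
  rw [h1, hw0] at h2
  rw [hw0'] at h2
  rw [hcc] at h2
  have hddne : dd n i ≠ 0 := by by_cases h : i = 0 <;> simp [dd, h]
  field_simp at h2
  exact h2

-- closure lemmas
lemma deltaZ_neg (n : ℕ) {z : Fin (n+2) → ℂ} {g : Fin (n+2) → ℂ[X]}
    (hg : g ∈ DeltaZ n z) : -g ∈ DeltaZ n z := by
  refine ⟨fun i => by simp [hg.1 i], fun k => ?_⟩
  have h := hg.2 k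
  constructor
  · have := h.1
    simp only [Pi.neg_apply, Polynomial.coeff_neg]
    rw [show (fun i => -(g i).coeff k) = -(fun i => (g i).coeff k) from rfl, star_neg,
      neg_dotProduct, this, neg_zero]
  · have := h.2
    simp only [Pi.neg_apply, Polynomial.coeff_neg]
    rw [show (fun i => -(g i).coeff k) = -(fun i => (g i).coeff k) from rfl, star_neg,
      neg_dotProduct, this, neg_zero]

lemma deltaZ_add (n : ℕ) {z : Fin (n+2) → ℂ} {g h : Fin (n+2) → ℂ[X]}
    (hg : g ∈ DeltaZ n z) (hh : h ∈ DeltaZ n z) : g + h ∈ DeltaZ n z := by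
  refine ⟨fun i => by simp [hg.1 i, hh.1 i], fun k => ?_⟩
  constructor
  · have h1 := (hg.2 k).1; have h2 := (hh.2 k).1
    simp only [Pi.add_apply, Polynomial.coeff_add]
    rw [show (fun i => (g i).coeff k + (h i).coeff k)
        = (fun i => (g i).coeff k) + (fun i => (h i).coeff k) from rfl, star_add,
      add_dotProduct, h1, h2, add_zero]
  · have h1 := (hg.2 k).2; have h2 := (hh.2 k).2
    simp only [Pi.add_apply, Polynomial.coeff_add]
    rw [show (fun i => (g i).coeff k + (h i).coeff k)
        = (fun i => (g i).coeff k) + (fun i => (h i).coeff k) from rfl, star_add,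
      add_dotProduct, h1, h2, add_zero]

lemma phi_neg {φ : ℂ[X]} (hφ : φ ∈ Phi) : -φ ∈ Phi := by
  refine ⟨by simp [hφ.1], ?_⟩
  rw [cstar_neg, hφ.2, neg_neg]

lemma phi_add {φ ψ : ℂ[X]} (hφ : φ ∈ Phi) (hψ : ψ ∈ Phi) : φ + ψ ∈ Phi := by
  refine ⟨by simp [hφ.1, hψ.1], ?_⟩
  rw [cstar_add, hφ.2, hψ.2, neg_add]

lemma phi_pdot_term (n : ℕ) {z : Fin (n+2) → ℂ} {g h : Fin (n+2) → ℂ[X]}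
    (hg : g ∈ DeltaZ n z) (hh : h ∈ DeltaZ n z) :
    Polynomial.C (1/2 : ℂ) * (pdot n h g - pdot n g h) ∈ Phi := by
  constructor
  · have e1 : (pdot n h g).eval 0 = 0 := by
      rw [← Polynomial.coeff_zero_eq_eval_zero]; exact pdot_coeff_zero n (z := z) hh.1
    have e2 : (pdot n g h).eval 0 = 0 := by
      rw [← Polynomial.coeff_zero_eq_eval_zero]; exact pdot_coeff_zero n (z := z) hg.1
    rw [Polynomial.eval_mul, Polynomial.eval_sub, e1, e2]
    simp
  · rw [cstar_mul, cstar_sub, cstar_pdot, cstar_pdot, cstar_C]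
    have : (starRingEnd ℂ) (1/2 : ℂ) = 1/2 := by
      rw [map_div₀, _root_.map_one, show ((2:ℂ)) = ((2:ℝ):ℂ) from by norm_num, Complex.conj_ofReal]
    rw [this]
    ring

lemma GP_nil (n : ℕ) : GP n ([] : List (Tt n)) = 1 := by unfold GP; simp

theorem listMain (n : ℕ) : ∀ (L L' : List (Tt n)), (∀ x ∈ L, okT n x) → (∀ x ∈ L', okT n x) →
    L.Chain' (fun a b => a.1 ≠ b.1) → L'.Chain' (fun a b => a.1 ≠ b.1) →
    GP n L = GP n L' → L = L' := by
  intro L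
  induction L with
  | nil =>
    intro L' _ hok' _ hch' heq
    cases L' with
    | nil => rfl
    | cons x' t' =>
      exfalso
      apply lemZ1 n t' x' hok' hch'
      rw [← heq, GP_nil]
  | cons x t ih =>
    intro L' hok hok' hch hch' heq
    cases L' with
    | nil =>
      exfalso
      apply lemZ1 n t x hok hch
      rw [heq, GP_nil]
    | cons x' t' =>
      have hz1 : x.1 = x'.1 := lemZ2 n t t' x x' hok hok' hch hch' heq
      obtain ⟨z1, φ1, g1⟩ := x
      obtain ⟨z1', φ1', g1'⟩ := x'
      simp only at hz1
      subst hz1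
      have hokx := hok ⟨z1, φ1, g1⟩ (by simp)
      have hokx' := hok' ⟨z1, φ1', g1'⟩ (by simp)
      have hz : z1 ∈ Xi n := hokx.1
      have hφ1 : φ1 ∈ Phi := hokx.2.1
      have hg1 : g1 ∈ DeltaZ n z1 := hokx.2.2.1
      have hφ1' : φ1' ∈ Phi := hokx'.2.1
      have hg1' : g1' ∈ DeltaZ n z1 := hokx'.2.2.1
      rw [GP_cons, GP_cons] at heq
      have e1 : Gmat n z1 (-φ1) (-g1) * (GofT n ⟨z1, φ1, g1⟩ * GP n t) =
          Gmat n z1 (-φ1) (-g1) * (GofT n ⟨z1, φ1', g1'⟩ * GP n t') := by rw [heq]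
      have hGx : GofT n (⟨z1, φ1, g1⟩ : Tt n) = Gmat n z1 φ1 g1 := rfl
      have hGx' : GofT n (⟨z1, φ1', g1'⟩ : Tt n) = Gmat n z1 φ1' g1' := rfl
      rw [hGx, hGx', ← mul_assoc, ← mul_assoc,
        Gmul n hz (deltaZ_neg n hg1) hg1 (-φ1) φ1,
        Gmul n hz (deltaZ_neg n hg1) hg1' (-φ1) φ1'] at e1
      have eid : -φ1 + φ1 + Polynomial.C (1/2 : ℂ) * (pdot n g1 (-g1) - pdot n (-g1) g1) = 0 := by
        rw [pdot_neg_left, pdot_neg_right]; ring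
      have eg : (-g1) + g1 = (0 : Fin (n+2) → ℂ[X]) := by funext i; simp
      rw [eid, eg, Gmat_zero, one_mul] at e1
      set ψe := -φ1 + φ1' + Polynomial.C (1/2 : ℂ) * (pdot n g1' (-g1) - pdot n (-g1) g1') with hψe
      set he := -g1 + g1' with hhe
      by_cases hcase : ψe = 0 ∧ he = 0
      · obtain ⟨hψ0, hh0⟩ := hcase
        have hg11 : g1 = g1' := by rwa [neg_add_eq_zero] at hh0
        have hφ11 : φ1 = φ1' := by
          rw [hψe, ← hg11, pdot_neg_left, pdot_neg_right] at hψ0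
          have : -φ1 + φ1' = 0 := by linear_combination hψ0
          rwa [neg_add_eq_zero] at this
        rw [hψ0, hh0, Gmat_zero, one_mul] at e1
        have ht := ih t' (fun u hu => hok u (by simp [hu])) (fun u hu => hok' u (by simp [hu]))
          (List.IsChain.tail hch) (List.IsChain.tail hch') e1
        rw [ht, hg11, hφ11]
      · -- nontrivial combined head
        have hψmem : ψe ∈ Phi :=
          phi_add (phi_add (phi_neg hφ1) hφ1') (phi_pdot_term n (deltaZ_neg n hg1) hg1')
        have hhmem : he ∈ DeltaZ n z1 := deltaZ_add n (deltaZ_neg n hg1) hg1'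
        have okM : ∀ u ∈ (⟨z1, ψe, he⟩ : Tt n) :: t', okT n u := by
          intro u hu
          rcases List.mem_cons.mp hu with h | h
          · rw [h]; exact ⟨hz, hψmem, hhmem, hcase⟩
          · exact hok' u (by simp [h])
        have chM : ((⟨z1, ψe, he⟩ : Tt n) :: t').Chain' (fun a b => a.1 ≠ b.1) := by
          show List.IsChain _ _
          rw [List.isChain_cons]
          exact ⟨(List.isChain_cons.mp hch').1, (List.isChain_cons.mp hch').2⟩
        have hGPM : GP n ((⟨z1, ψe, he⟩ : Tt n) :: t') = Gmat n z1 ψe he * GP n t' := by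
          rw [GP_cons]; rfl
        cases t with
        | nil =>
          exfalso
          apply lemZ1 n t' ⟨z1, ψe, he⟩ okM chM
          rw [hGPM, ← e1, GP_nil]
        | cons y t2 =>
          exfalso
          have hy : y.1 = z1 := by
            apply lemZ2 n t2 t' y ⟨z1, ψe, he⟩
              (fun u hu => hok u (by simp [hu])) okM (List.IsChain.tail hch) chM
            rw [hGPM, ← e1]
          exact (List.isChain_cons_cons.mp hch).1 hy.symm

lemma chain'_ofFn {α : Type*} {R : α → α → Prop} {m : ℕ} (f : Fin m → α)
    (h : ∀ (i : ℕ) (hi : i + 1 < m), R (f ⟨i, Nat.lt_of_succ_lt hi⟩) (f ⟨i+1, hi⟩)) :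
    (List.ofFn f).Chain' R := by
  show List.IsChain _ _
  rw [List.isChain_iff_getElem]
  intro i hi
  simp only [List.length_ofFn] at hi
  rw [List.getElem_ofFn, List.getElem_ofFn]
  exact h i (by omega)


/-- Theorem 1, uniqueness of decomposition: two alternating products of
nontrivial factors coincide only if they have the same length and identical factors. -/
theorem stmt4 (n : ℕ) (η η' : ℕ)
    (z : Fin η → (Fin (n + 2) → ℂ)) (φ : Fin η → ℂ[X]) (g : Fin η → (Fin (n + 2) → ℂ[X]))
    (z' : Fin η' → (Fin (n + 2) → ℂ)) (φ' : Fin η' → ℂ[X])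
    (g' : Fin η' → (Fin (n + 2) → ℂ[X]))
    (hz : ∀ ι, z ι ∈ Xi n) (hφ : ∀ ι, φ ι ∈ Phi) (hg : ∀ ι, g ι ∈ DeltaZ n (z ι))
    (hz' : ∀ ι, z' ι ∈ Xi n) (hφ' : ∀ ι, φ' ι ∈ Phi) (hg' : ∀ ι, g' ι ∈ DeltaZ n (z' ι))
    (hnt : ∀ ι, ¬(φ ι = 0 ∧ g ι = 0)) (hnt' : ∀ ι, ¬(φ' ι = 0 ∧ g' ι = 0))
    (halt : ∀ (i : ℕ) (h : i + 1 < η), z ⟨i, by omega⟩ ≠ z ⟨i + 1, h⟩)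
    (halt' : ∀ (i : ℕ) (h : i + 1 < η'), z' ⟨i, by omega⟩ ≠ z' ⟨i + 1, h⟩)
    (heq : (List.ofFn fun ι => Gmat n (z ι) (φ ι) (g ι)).prod =
           (List.ofFn fun ι => Gmat n (z' ι) (φ' ι) (g' ι)).prod) :
    η = η' ∧
      ∀ (i : ℕ) (h : i < η) (h' : i < η'),
        z ⟨i, h⟩ = z' ⟨i, h'⟩ ∧ φ ⟨i, h⟩ = φ' ⟨i, h'⟩ ∧ g ⟨i, h⟩ = g' ⟨i, h'⟩ := by
  set f : Fin η → Tt n := fun ι => ⟨z ι, φ ι, g ι⟩ with hf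
  set f' : Fin η' → Tt n := fun ι => ⟨z' ι, φ' ι, g' ι⟩ with hf'
  have hGPL : GP n (List.ofFn f) = (List.ofFn fun ι => Gmat n (z ι) (φ ι) (g ι)).prod := by
    unfold GP
    rw [List.map_ofFn]
    rfl
  have hGPL' : GP n (List.ofFn f') = (List.ofFn fun ι => Gmat n (z' ι) (φ' ι) (g' ι)).prod := by
    unfold GP
    rw [List.map_ofFn]
    rfl
  have hokL : ∀ x ∈ List.ofFn f, okT n x := by
    intro x hx
    rw [List.mem_ofFn] at hx
    obtain ⟨ι, rfl⟩ := hx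
    exact ⟨hz ι, hφ ι, hg ι, hnt ι⟩
  have hokL' : ∀ x ∈ List.ofFn f', okT n x := by
    intro x hx
    rw [List.mem_ofFn] at hx
    obtain ⟨ι, rfl⟩ := hx
    exact ⟨hz' ι, hφ' ι, hg' ι, hnt' ι⟩
  have hchL : (List.ofFn f).Chain' (fun a b => a.1 ≠ b.1) :=
    chain'_ofFn f (fun i hi => halt i hi)
  have hchL' : (List.ofFn f').Chain' (fun a b => a.1 ≠ b.1) :=
    chain'_ofFn f' (fun i hi => halt' i hi)
  have hLL : List.ofFn f = List.ofFn f' :=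
    listMain n (List.ofFn f) (List.ofFn f') hokL hokL' hchL hchL' (by rw [hGPL, hGPL', heq])
  have hlen : η = η' := by
    have := congrArg List.length hLL
    simpa using this
  subst hlen
  have hff : f = f' := List.ofFn_injective hLL
  refine ⟨rfl, ?_⟩
  intro i h h'
  have := congrFun hff ⟨i, h⟩
  rw [hf, hf'] at this
  exact ⟨congrArg Prod.fst this, congrArg (fun x => x.2.1) this, congrArg (fun x => x.2.2) this⟩
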